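/- Let p be the transition matrix of an irreducible Markov chain on a countable state space A. Then the following are equivalent: (1) the chain is recurrent, i.e. μ_y(τ_x < ∞) = 1 for all x,y ∈ A; (2) for every x,y ∈ A, E^x[V_y] = ∞; (3) there exist x,y ∈ A with E^x[V_y] = ∞; (4) for every x,y ∈ A, μ_x(V_y = ∞) = 1; (5) there exist x,y ∈ A with μ_x(V_y = ∞) = 1. -/

import Mathlib

open MeasureTheory
open scoped ENNReal

set_option linter.unusedSectionVars false
set_option linter.unusedVariables false

/-- The `n`-step transition probabilities (entries of the `n`-th matrix power of `p`)
on a countable state space. -/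
noncomputable def matPow {A : Type*} [DecidableEq A] (p : A → A → ℝ) : ℕ → A → A → ℝ
  | 0 => fun x y => if x = y then 1 else 0
  | n + 1 => fun x y => ∑' z, matPow p n x z * p z y

/-- `V_y(ω) = #{n ≥ 0 : ω_n = y} ∈ ℕ ∪ {∞}`, the total number of visits of the path `ω`
to the state `y` (as an element of `ℝ≥0∞`). -/
noncomputable def visitCount {A : Type*} (y : A) (ω : ℕ → A) : ℝ≥0∞ :=
  ∑' n : ℕ, ({y} : Set A).indicator (fun _ => 1) (ω n)

namespace MCAux

variable {A : Type*} [Countable A] [Nonempty A] [DecidableEq A]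
  [MeasurableSpace A] [MeasurableSingletonClass A]

lemma measA (s : Set A) : MeasurableSet s := s.to_countable.measurableSet

/-- cylinder set -/
def cyl (n : ℕ) (a : ℕ → A) : Set (ℕ → A) := {ω | ∀ i ≤ n, ω i = a i}

def shift (k : ℕ) (ω : ℕ → A) : ℕ → A := fun i => ω (k + i)

lemma measurable_shift (k : ℕ) : Measurable (shift (A := A) k) := by
  apply measurable_pi_lambda
  intro i; exact measurable_pi_apply _

lemma measurable_coord (n : ℕ) (s : Set A) : MeasurableSet {ω : ℕ → A | ω n ∈ s} :=
  (measurable_pi_apply n) (measA s)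

lemma cyl_measurable (n : ℕ) (a : ℕ → A) : MeasurableSet (cyl n a) := by
  have : cyl n a = ⋂ i ∈ Finset.range (n+1), {ω : ℕ → A | ω i ∈ ({a i} : Set A)} := by
    ext ω
    simp [cyl, Nat.lt_succ_iff]
  rw [this]
  exact MeasurableSet.biInter (Set.to_countable _) fun i _ => measurable_coord i _

/-- extension of a finite path to an infinite one -/
def exten (n : ℕ) (b : Fin (n+1) → A) : ℕ → A := fun i => b ⟨min i n, by omega⟩

lemma exten_le {n : ℕ} (b : Fin (n+1) → A) {i : ℕ} (hi : i ≤ n) :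
    exten n b i = b ⟨i, by omega⟩ := by
  simp [exten, Nat.min_eq_left hi]

noncomputable def Wgt (p : A → A → ℝ) (x : A) (n : ℕ) (a : ℕ → A) : ℝ≥0∞ :=
  (if a 0 = x then 1 else 0) *
    ∏ i ∈ Finset.range n, ENNReal.ofReal (p (a i) (a (i+1)))

lemma Wgt_le_one {p : A → A → ℝ} (hp1 : ∀ x y, p x y ≤ 1) (x : A) (n : ℕ) (a : ℕ → A) :
    Wgt p x n a ≤ 1 := by
  unfold Wgt
  calc (if a 0 = x then (1:ℝ≥0∞) else 0) * ∏ i ∈ Finset.range n, ENNReal.ofReal (p (a i) (a (i+1)))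
      ≤ 1 * ∏ i ∈ Finset.range n, 1 := by
        gcongr with i hi
        · split <;> simp
        · exact ENNReal.ofReal_le_one.2 (hp1 _ _)
  _ = 1 := by simp


/-- the cylinders of a fixed length partition the space -/
lemma cyl_disjoint {n : ℕ} {b b' : Fin (n+1) → A} (h : b ≠ b') :
    Disjoint (cyl n (exten n b)) (cyl n (exten n b')) := by
  rw [Set.disjoint_left]
  intro ω hω hω'
  apply h
  funext i
  have h1 := hω i.1 (by omega)
  have h2 := hω' i.1 (by omega)
  rw [exten_le _ (by omega), Fin.eta] at h1 h2
  exact h1.symm.trans h2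

lemma mem_cyl_exten (n : ℕ) (ω : ℕ → A) :
    ω ∈ cyl n (exten n (fun i : Fin (n+1) => ω i.1)) := by
  intro i hi
  rw [exten_le _ hi]

def cylSets (A : Type*) : Set (Set (ℕ → A)) := {S | ∃ n a, S = cyl n a}

lemma cyl_inter_of_le {n m : ℕ} (h : n ≤ m) (a b : ℕ → A)
    (hne : (cyl n a ∩ cyl m b).Nonempty) : cyl n a ∩ cyl m b = cyl m b := by
  obtain ⟨ω, hωa, hωb⟩ := hne
  apply Set.inter_eq_self_of_subset_right
  intro ω' hω' i hi
  rw [hω' i (hi.trans h), ← hωb i (hi.trans h), hωa i hi]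

lemma isPiSystem_cylSets : IsPiSystem (cylSets A) := by
  rintro _ ⟨n, a, rfl⟩ _ ⟨m, b, rfl⟩ hne
  rcases le_total n m with h | h
  · rw [cyl_inter_of_le h a b hne]; exact ⟨m, b, rfl⟩
  · rw [Set.inter_comm] at hne ⊢
    rw [cyl_inter_of_le h b a hne]; exact ⟨n, a, rfl⟩

/-- decomposition of a coordinate-determined set into cylinders -/
lemma determined_eq_iUnion (n : ℕ) (S : Set (ℕ → A))
    (hS : ∀ ω ω', (∀ i ≤ n, ω i = ω' i) → ω ∈ S → ω' ∈ S) :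
    S = ⋃ b : {b : Fin (n+1) → A // exten n b ∈ S}, cyl n (exten n b.1) := by
  ext ω
  constructor
  · intro hω
    refine Set.mem_iUnion.2 ⟨⟨fun i => ω i.1, ?_⟩, mem_cyl_exten n ω⟩
    exact hS ω _ (fun i hi => mem_cyl_exten n ω i hi) hω
  · rintro hω
    obtain ⟨b, hb⟩ := Set.mem_iUnion.1 hω
    exact hS (exten n b.1) ω (fun i hi => (hb i hi).symm) b.2

lemma pi_eq_generateFrom :
    (inferInstance : MeasurableSpace (ℕ → A)) = MeasurableSpace.generateFrom (cylSets A) := by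
  apply le_antisymm
  · have h : ∀ n : ℕ, @Measurable (ℕ → A) A (MeasurableSpace.generateFrom (cylSets A)) _
        (fun ω => ω n) := by
      intro n s _
      have hdet : ∀ ω ω' : ℕ → A, (∀ i ≤ n, ω i = ω' i) →
          ω ∈ {ω : ℕ → A | ω n ∈ s} → ω' ∈ {ω : ℕ → A | ω n ∈ s} := by
        intro ω ω' hagree hω
        simpa [← hagree n le_rfl] using hω
      rw [show (fun ω : ℕ → A => ω n) ⁻¹' s = {ω : ℕ → A | ω n ∈ s} from rfl,
        determined_eq_iUnion n _ hdet]
      exact MeasurableSet.iUnion fun b =>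
        MeasurableSpace.measurableSet_generateFrom ⟨n, exten n b.1, rfl⟩
    have h0 : @Measurable (ℕ → A) (ℕ → A) (MeasurableSpace.generateFrom (cylSets A))
        MeasurableSpace.pi id :=
      (@measurable_pi_iff (ℕ → A) ℕ (fun _ => A)
        (MeasurableSpace.generateFrom (cylSets A)) (fun _ => inferInstance) id).2 h
    intro s hs
    exact h0 hs
  · apply MeasurableSpace.generateFrom_le
    rintro _ ⟨n, a, rfl⟩
    exact cyl_measurable n a

/-- gluing of paths -/
def glue (k : ℕ) (a b : ℕ → A) : ℕ → A := fun i => if i ≤ k then a i else b (i - k)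

lemma cyl_shift_inter_of_eq (k m : ℕ) (a b : ℕ → A) (hb : b 0 = a k) :
    cyl k a ∩ shift k ⁻¹' cyl m b = cyl (k+m) (glue k a b) := by
  ext ω
  constructor
  · rintro ⟨h1, h2⟩ i hi
    unfold glue
    split
    · exact h1 i ‹_›
    · have hik : k < i := by omega
      have := h2 (i - k) (by omega)
      unfold shift at this
      rwa [show k + (i - k) = i by omega] at this
  · intro h
    constructor
    · intro i hi
      have := h i (by omega)
      unfold glue at this
      rwa [if_pos hi] at this
    · intro j hj
      unfold shift
      have := h (k + j) (by omega)
      unfold glue at this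
      rcases Nat.eq_zero_or_pos j with rfl | hjpos
      · simpa [hb] using this
      · rw [if_neg (by omega), show k + j - k = j by omega] at this
        exact this

lemma cyl_shift_inter_of_ne (k m : ℕ) (a b : ℕ → A) (hb : b 0 ≠ a k) :
    cyl k a ∩ shift k ⁻¹' cyl m b = ∅ := by
  ext ω
  simp only [Set.mem_inter_iff, Set.mem_preimage, Set.mem_empty_iff_false, iff_false]
  rintro ⟨h1, h2⟩
  have hk := h1 k le_rfl
  have h0 := h2 0 (Nat.zero_le _)
  unfold shift at h0
  simp only [Nat.add_zero] at h0
  exact hb (h0 ▸ hk ▸ rfl)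

lemma Wgt_glue (p : A → A → ℝ) (x : A) (k m : ℕ) (a b : ℕ → A) (hb : b 0 = a k) :
    Wgt p x (k+m) (glue k a b) = Wgt p x k a * Wgt p (a k) m b := by
  have hg0 : glue k a b 0 = a 0 := by simp [glue]
  have hglue_le : ∀ i ≤ k, glue k a b i = a i := fun i hi => by simp [glue, hi]
  have hglue_gt : ∀ i, 1 ≤ i → glue k a b (k + i) = b i := by
    intro i hi
    unfold glue
    rw [if_neg (by omega), show k + i - k = i by omega]
  have hglue_k : ∀ i, glue k a b (k + i) = b i := by
    intro i
    rcases Nat.eq_zero_or_pos i with rfl | hi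
    · simpa [hb] using hglue_le k le_rfl
    · exact hglue_gt i hi
  unfold Wgt
  rw [Finset.prod_range_add, hg0, hb]
  have h1 : ∀ i ∈ Finset.range k,
      ENNReal.ofReal (p (glue k a b i) (glue k a b (i+1))) =
      ENNReal.ofReal (p (a i) (a (i+1))) := by
    intro i hi
    rw [Finset.mem_range] at hi
    rw [hglue_le i (by omega), hglue_le (i+1) (by omega)]
  have h2 : ∀ i ∈ Finset.range m,
      ENNReal.ofReal (p (glue k a b (k+i)) (glue k a b (k+i+1))) =
      ENNReal.ofReal (p (b i) (b (i+1))) := by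
    intro i _
    rw [hglue_k i, show k + i + 1 = k + (i+1) by omega, hglue_k (i+1)]
  rw [Finset.prod_congr rfl h1, Finset.prod_congr rfl h2]
  simp only [if_pos]
  ring


section withP

variable (p : A → A → ℝ) (hnn : ∀ x y, 0 ≤ p x y)
  (μ : A → Measure (ℕ → A))
  (hμ : ∀ (x : A) (n : ℕ) (a : ℕ → A),
      μ x {ω | ∀ i ≤ n, ω i = a i} =
        ENNReal.ofReal ((if a 0 = x then (1 : ℝ) else 0) *
          ∏ i ∈ Finset.range n, p (a i) (a (i + 1))))

include hnn hμ in
lemma meas_cyl (x : A) (n : ℕ) (a : ℕ → A) : μ x (cyl n a) = Wgt p x n a := by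
  rw [show cyl n a = {ω | ∀ i ≤ n, ω i = a i} from rfl, hμ]
  rw [ENNReal.ofReal_mul (by split <;> norm_num), ENNReal.ofReal_prod_of_nonneg
    (fun i _ => hnn _ _)]
  unfold Wgt
  congr 1
  split <;> simp

include hnn hμ in
/-- measure of a set determined by coordinates `≤ n` -/
lemma meas_determined (x : A) (n : ℕ) (S : Set (ℕ → A))
    (hS : ∀ ω ω', (∀ i ≤ n, ω i = ω' i) → ω ∈ S → ω' ∈ S) :
    μ x S = ∑' b : {b : Fin (n+1) → A // exten n b ∈ S}, Wgt p x n (exten n b.1) := by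
  conv_lhs => rw [determined_eq_iUnion n S hS]
  rw [measure_iUnion]
  · exact tsum_congr fun b => meas_cyl p hnn μ hμ x n _
  · intro b b' hne
    exact cyl_disjoint (fun h => hne (Subtype.ext h))
  · intro b; exact cyl_measurable _ _


variable (hprob : ∀ x, IsProbabilityMeasure (μ x))

include hnn hμ hprob in
lemma markov (x : A) (k : ℕ) (a : ℕ → A) {F : Set (ℕ → A)} (hF : MeasurableSet F) :
    μ x (cyl k a ∩ shift k ⁻¹' F) = Wgt p x k a * μ (a k) F := by
  haveI := hprob x
  haveI := hprob (a k)
  have hres : IsFiniteMeasure ((μ x).restrict (cyl k a)) := by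
    constructor
    rw [Measure.restrict_apply_univ]
    exact (measure_lt_top _ _)
  haveI := hres
  have key : Measure.map (shift k) ((μ x).restrict (cyl k a)) = Wgt p x k a • μ (a k) := by
    haveI : IsFiniteMeasure (Wgt p x k a • μ (a k)) := by
      constructor
      simp only [Measure.smul_apply, smul_eq_mul, measure_univ, mul_one]
      exact (meas_cyl p hnn μ hμ x k a ▸ measure_lt_top (μ x) (cyl k a))
    refine (ext_of_generate_finite (cylSets A) pi_eq_generateFrom isPiSystem_cylSets ?_ ?_).symm
    · rintro _ ⟨m, b, rfl⟩
      rw [Measure.map_apply (measurable_shift k) (cyl_measurable m b),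
        Measure.restrict_apply (measurable_shift k (cyl_measurable m b)),
        Measure.smul_apply, smul_eq_mul, Set.inter_comm]
      by_cases hb : b 0 = a k
      · rw [cyl_shift_inter_of_eq k m a b hb, meas_cyl p hnn μ hμ,
          meas_cyl p hnn μ hμ, Wgt_glue p x k m a b hb]
      · rw [cyl_shift_inter_of_ne k m a b hb, meas_cyl p hnn μ hμ]
        simp only [measure_empty]
        unfold Wgt
        rw [if_neg hb]
        simp
    · rw [Measure.map_apply (measurable_shift k) MeasurableSet.univ,
        Set.preimage_univ, Measure.restrict_apply_univ,
        Measure.smul_apply, smul_eq_mul, measure_univ, mul_one,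
        meas_cyl p hnn μ hμ]
  calc μ x (cyl k a ∩ shift k ⁻¹' F)
      = ((μ x).restrict (cyl k a)) (shift k ⁻¹' F) := by
        rw [Measure.restrict_apply (measurable_shift k hF), Set.inter_comm]
  _ = (Measure.map (shift k) ((μ x).restrict (cyl k a))) F := by
        rw [Measure.map_apply (measurable_shift k) hF]
  _ = Wgt p x k a * μ (a k) F := by rw [key, Measure.smul_apply, smul_eq_mul]

include hnn hμ hprob in
lemma markov_set (x z : A) (n : ℕ) (S : Set (ℕ → A))
    (hS : ∀ ω ω', (∀ i ≤ n, ω i = ω' i) → ω ∈ S → ω' ∈ S)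
    (hz : ∀ ω ∈ S, ω n = z) {F : Set (ℕ → A)} (hF : MeasurableSet F) :
    μ x (S ∩ shift n ⁻¹' F) = μ x S * μ z F := by
  have hSint : S ∩ shift n ⁻¹' F =
      ⋃ b : {b : Fin (n+1) → A // exten n b ∈ S}, (cyl n (exten n b.1) ∩ shift n ⁻¹' F) := by
    conv_lhs => rw [determined_eq_iUnion n S hS]
    rw [Set.iUnion_inter]
  have hd : Pairwise (Function.onFun Disjoint
      (fun b : {b : Fin (n+1) → A // exten n b ∈ S} => cyl n (exten n b.1) ∩ shift n ⁻¹' F)) := by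
    intro b b' hne
    exact (cyl_disjoint (fun h => hne (Subtype.ext h))).mono
      Set.inter_subset_left Set.inter_subset_left
  have hm : ∀ b : {b : Fin (n+1) → A // exten n b ∈ S},
      MeasurableSet (cyl n (exten n b.1) ∩ shift n ⁻¹' F) := fun b =>
    (cyl_measurable _ _).inter (measurable_shift n hF)
  have hterm : ∀ b : {b : Fin (n+1) → A // exten n b ∈ S},
      μ x (cyl n (exten n b.1) ∩ shift n ⁻¹' F) = Wgt p x n (exten n b.1) * μ z F := by
    intro b
    rw [markov p hnn μ hμ hprob x n (exten n b.1) hF, hz _ b.2]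
  rw [hSint, measure_iUnion hd hm, tsum_congr hterm, ENNReal.tsum_mul_right,
    ← meas_determined p hnn μ hμ x n S hS]


section hitting

/-- event of hitting `y` at a positive time -/
def Hit (y : A) : Set (ℕ → A) := {ω | ∃ k, 1 ≤ k ∧ ω k = y}

/-- event that the first positive hit of `y` occurs at time `k` -/
def Tau (y : A) (k : ℕ) : Set (ℕ → A) := {ω | ω k = y ∧ ∀ j, 1 ≤ j → j < k → ω j ≠ y}

/-- event of at least `m` positive hits of `y` -/
def Em (y : A) (m : ℕ) : Set (ℕ → A) :=
  {ω | ∃ F : Finset ℕ, F.card = m ∧ ∀ n ∈ F, 1 ≤ n ∧ ω n = y}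

lemma Hit_measurable (y : A) : MeasurableSet (Hit y) := by
  have : Hit y = ⋃ k : ℕ, {ω : ℕ → A | ω (k+1) ∈ ({y} : Set A)} := by
    ext ω
    constructor
    · rintro ⟨k, hk1, hk2⟩
      exact Set.mem_iUnion.2 ⟨k - 1, by simpa [Nat.sub_add_cancel hk1] using hk2⟩
    · rintro hω
      obtain ⟨k, hk⟩ := Set.mem_iUnion.1 hω
      exact ⟨k + 1, by omega, hk⟩
  rw [this]
  exact MeasurableSet.iUnion fun k => measurable_coord _ _

lemma Tau_measurable (y : A) (k : ℕ) : MeasurableSet (Tau y k) := by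
  have : Tau y k = {ω : ℕ → A | ω k ∈ ({y} : Set A)} ∩
      ⋂ j : ℕ, {ω : ℕ → A | 1 ≤ j → j < k → ω j ≠ y} := by
    ext ω
    simp [Tau]
  rw [this]
  refine (measurable_coord _ _).inter (MeasurableSet.iInter fun j => ?_)
  by_cases hj : 1 ≤ j ∧ j < k
  · have : {ω : ℕ → A | 1 ≤ j → j < k → ω j ≠ y} = {ω : ℕ → A | ω j ∈ ({y} : Set A)}ᶜ := by
      ext ω; simp [hj.1, hj.2]
    rw [this]
    exact (measurable_coord _ _).compl
  · have : {ω : ℕ → A | 1 ≤ j → j < k → ω j ≠ y} = Set.univ := by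
      ext ω
      simp only [Set.mem_setOf_eq, Set.mem_univ, iff_true]
      intro h1 h2
      exact absurd ⟨h1, h2⟩ hj
    rw [this]
    exact MeasurableSet.univ

lemma Em_measurable (y : A) (m : ℕ) : MeasurableSet (Em y m) := by
  have : Em y m = ⋃ F : {F : Finset ℕ // F.card = m},
      ⋂ n ∈ F.1, {ω : ℕ → A | 1 ≤ n ∧ ω n = y} := by
    ext ω
    constructor
    · rintro ⟨F, hF, hmem⟩
      exact Set.mem_iUnion.2 ⟨⟨F, hF⟩, by simpa using hmem⟩
    · intro hω
      obtain ⟨F, hF⟩ := Set.mem_iUnion.1 hω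
      exact ⟨F.1, F.2, by simpa using hF⟩
  rw [this]
  refine MeasurableSet.iUnion fun F => MeasurableSet.biInter (Set.to_countable _) fun n _ => ?_
  by_cases hn : 1 ≤ n
  · have : {ω : ℕ → A | 1 ≤ n ∧ ω n = y} = {ω : ℕ → A | ω n ∈ ({y} : Set A)} := by
      ext ω; simp [hn]
    rw [this]; exact measurable_coord _ _
  · have : {ω : ℕ → A | 1 ≤ n ∧ ω n = y} = ∅ := by
      ext ω; simp [hn]
    rw [this]; exact MeasurableSet.empty

lemma Tau_disjoint (y : A) : Pairwise fun k k' => Disjoint (Tau y (k+1)) (Tau y (k'+1)) := by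
  have key : ∀ k k' : ℕ, k < k' → Disjoint (Tau y (k+1)) (Tau y (k'+1)) := by
    intro k k' hkk
    rw [Set.disjoint_left]
    rintro ω ⟨h1, -⟩ ⟨-, h2⟩
    exact h2 (k+1) (by omega) (by omega) h1
  intro k k' hne
  rcases lt_or_gt_of_ne hne with h | h
  · exact key _ _ h
  · exact (key _ _ h).symm

lemma Hit_eq_iUnion_Tau (y : A) : Hit y = ⋃ k : ℕ, Tau y (k+1) := by
  classical
  ext ω
  constructor
  · rintro ⟨k, hk1, hky⟩
    have hex : ∃ j, 1 ≤ j ∧ ω j = y := ⟨k, hk1, hky⟩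
    let K := Nat.find hex
    have hK := Nat.find_spec hex
    have hKmin := fun j (hj : j < K) => Nat.find_min hex hj
    refine Set.mem_iUnion.2 ⟨K - 1, ?_, ?_⟩
    · rw [show K - 1 + 1 = K by omega]
      exact hK.2
    · intro j hj1 hj2
      rw [show K - 1 + 1 = K by omega] at hj2
      intro hjy
      exact hKmin j hj2 ⟨hj1, hjy⟩
  · intro hω
    obtain ⟨k, h1, -⟩ := Set.mem_iUnion.1 hω
    exact ⟨k+1, by omega, h1⟩

lemma Em_zero (y : A) : Em y 0 = Set.univ := by
  ext ω
  simp only [Set.mem_univ, iff_true]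
  exact ⟨∅, by simp, by simp⟩

lemma Em_antitone (y : A) {m m' : ℕ} (h : m ≤ m') : Em y m' ⊆ Em y m := by
  rintro ω ⟨F, hcard, hmem⟩
  obtain ⟨t, hts, htc⟩ := Finset.exists_subset_card_eq (hcard ▸ h)
  exact ⟨t, htc, fun n hn => hmem n (hts hn)⟩

lemma Em_succ_eq (y : A) (m : ℕ) :
    Em y (m+1) = ⋃ k : ℕ, (Tau y (k+1) ∩ shift (k+1) ⁻¹' Em y m) := by
  classical
  ext ω
  constructor
  · rintro ⟨F, hcard, hmem⟩
    obtain ⟨n₀, hn₀⟩ := Finset.card_pos.1 (show 0 < F.card by omega)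
    have hex : ∃ j, 1 ≤ j ∧ ω j = y := ⟨n₀, (hmem n₀ hn₀).1, (hmem n₀ hn₀).2⟩
    set K := Nat.find hex with hKdef
    have hK := Nat.find_spec hex
    have hKmin : ∀ j, j < K → ¬(1 ≤ j ∧ ω j = y) := fun j hj => Nat.find_min hex hj
    have hK1 : 1 ≤ K := hK.1
    refine Set.mem_iUnion.2 ⟨K - 1, ?_, ?_⟩
    · rw [show K - 1 + 1 = K by omega]
      refine ⟨hK.2, fun j hj1 hj2 hjy => hKmin j hj2 ⟨hj1, hjy⟩⟩
    · rw [Set.mem_preimage, show K - 1 + 1 = K by omega]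
      -- build a finset of m positive hits of the shifted path
      have hFK : ∀ n ∈ F, K ≤ n := by
        intro n hn
        by_contra hlt
        exact hKmin n (by omega) ⟨(hmem n hn).1, (hmem n hn).2⟩
      have hinj : Set.InjOn (· - K) (F.erase K) := by
        intro n hn n' hn' hnn
        have h1 : K ≤ n := hFK n (Finset.mem_of_mem_erase hn)
        have h2 : K ≤ n' := hFK n' (Finset.mem_of_mem_erase hn')
        have h3 : n ≠ K := Finset.ne_of_mem_erase hn
        have h4 : n' ≠ K := Finset.ne_of_mem_erase hn'
        simp only at hnn
        omega
      have hcard2 : m ≤ ((F.erase K).image (· - K)).card := by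
        rw [Finset.card_image_of_injOn hinj]
        by_cases hKF : K ∈ F
        · rw [Finset.card_erase_of_mem hKF, hcard]
          omega
        · rw [Finset.erase_eq_of_notMem hKF, hcard]
          omega
      obtain ⟨G, hGsub, hGcard⟩ := Finset.exists_subset_card_eq hcard2
      refine ⟨G, hGcard, fun n hn => ?_⟩
      have hnG := hGsub hn
      obtain ⟨n', hn', rfl⟩ := Finset.mem_image.1 hnG
      have h1 : K ≤ n' := hFK n' (Finset.mem_of_mem_erase hn')
      have h3 : n' ≠ K := Finset.ne_of_mem_erase hn'
      constructor
      · omega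
      · unfold shift
        rw [show K + (n' - K) = n' by omega]
        exact (hmem n' (Finset.mem_of_mem_erase hn')).2
  · intro hω
    obtain ⟨k, hτ, hEm⟩ := Set.mem_iUnion.1 hω
    rw [Set.mem_preimage] at hEm
    obtain ⟨F, hcard, hmem⟩ := hEm
    refine ⟨insert (k+1) (F.image (· + (k+1))), ?_, ?_⟩
    · rw [Finset.card_insert_of_notMem, Finset.card_image_of_injective _
        (add_left_injective (k+1)), hcard]
      intro hmem'
      obtain ⟨n, hn, hne⟩ := Finset.mem_image.1 hmem'
      have := (hmem n hn).1
      omega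
    · intro n hn
      rcases Finset.mem_insert.1 hn with rfl | hn'
      · exact ⟨by omega, hτ.1⟩
      · obtain ⟨n', hn'', rfl⟩ := Finset.mem_image.1 hn'
        have h1 := (hmem n' hn'').1
        have h2 := (hmem n' hn'').2
        unfold shift at h2
        refine ⟨by omega, ?_⟩
        rwa [show n' + (k+1) = (k+1) + n' by omega]

include hnn hμ hprob in
lemma meas_Hit (x y : A) : μ x (Hit y) = ∑' k : ℕ, μ x (Tau y (k+1)) := by
  rw [Hit_eq_iUnion_Tau, measure_iUnion (Tau_disjoint y) (fun k => Tau_measurable y _)]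

include hnn hμ hprob in
lemma markov_tau (x y z : A) (k : ℕ) {F : Set (ℕ → A)} (hF : MeasurableSet F) :
    μ x (Tau y (k+1) ∩ shift (k+1) ⁻¹' F) = μ x (Tau y (k+1)) * μ y F := by
  refine markov_set p hnn μ hμ hprob x y (k+1) (Tau y (k+1)) ?_ (fun ω hω => hω.1) hF
  rintro ω ω' hagree ⟨h1, h2⟩
  constructor
  · rw [← hagree (k+1) le_rfl]; exact h1
  · intro j hj1 hj2
    rw [← hagree j (by omega)]
    exact h2 j hj1 hj2

include hnn hμ hprob in
lemma meas_Em_succ (x y : A) (m : ℕ) :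
    μ x (Em y (m+1)) = μ x (Hit y) * μ y (Em y m) := by
  rw [Em_succ_eq]
  rw [measure_iUnion]
  · rw [meas_Hit p hnn μ hμ hprob x y, ← ENNReal.tsum_mul_right]
    exact tsum_congr fun k => markov_tau p hnn μ hμ hprob x y y k (Em_measurable y m)
  · intro k k' hne
    exact (Tau_disjoint y hne).mono Set.inter_subset_left Set.inter_subset_left
  · intro k
    exact (Tau_measurable y _).inter (measurable_shift _ (Em_measurable y m))

include hnn hμ hprob in
lemma meas_Em_self (y : A) (m : ℕ) :
    μ y (Em y m) = (μ y (Hit y))^m := by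
  induction m with
  | zero =>
    haveI := hprob y
    rw [Em_zero]
    simp
  | succ m ih =>
    rw [meas_Em_succ p hnn μ hμ hprob, ih, pow_succ]
    ring

include hnn hμ hprob in
lemma meas_Em (x y : A) (m : ℕ) :
    μ x (Em y (m+1)) = μ x (Hit y) * (μ y (Hit y))^m := by
  rw [meas_Em_succ p hnn μ hμ hprob, meas_Em_self p hnn μ hμ hprob]

end hitting


section visits


lemma sum_ite_card (F : Finset ℕ) (P : ℕ → Prop) [DecidablePred P] :
    (∑ n ∈ F, if P n then (1:ℝ≥0∞) else 0) = ((F.filter P).card : ℝ≥0∞) := by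
  rw [← Finset.sum_filter]
  simp

lemma measurable_coord_eq (n : ℕ) (y : A) : MeasurableSet {ω : ℕ → A | ω n = y} :=
  measurable_coord n ({y} : Set A)

lemma indicator_eq_ite (y : A) (z : A) :
    ({y} : Set A).indicator (fun _ => (1:ℝ≥0∞)) z = if z = y then 1 else 0 := by
  by_cases h : z = y <;> simp [Set.indicator_apply, h]

lemma measurable_visitCount (y : A) : Measurable (visitCount y) := by
  apply Measurable.ennreal_tsum
  intro n
  exact (measurable_const.indicator (measA {y})).comp (measurable_pi_apply n)

lemma visitCount_split (y : A) (ω : ℕ → A) :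
    visitCount y ω = (if ω 0 = y then 1 else 0) +
      ∑' n : ℕ, (if ω (n+1) = y then (1:ℝ≥0∞) else 0) := by
  unfold visitCount
  rw [tsum_eq_zero_add' ENNReal.summable]
  simp only [indicator_eq_ite]

lemma ennreal_eq_top_of_nat_le {x : ℝ≥0∞} (h : ∀ m : ℕ, (m : ℝ≥0∞) ≤ x) : x = ⊤ := by
  refine ENNReal.eq_top_of_forall_nnreal_le fun r => ?_
  calc (r : ℝ≥0∞) ≤ ((⌈r⌉₊ : ℕ) : ℝ≥0∞) := by
        rw [← ENNReal.coe_natCast]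
        exact ENNReal.coe_le_coe.2 (Nat.le_ceil r)
  _ ≤ x := h _

/-- a finset of positive hit-times for the shifted count gives membership in `Em` -/
lemma mem_Em_of_finset (y : A) (ω : ℕ → A) (F : Finset ℕ)
    (h : ∀ n ∈ F, ω (n+1) = y) : ω ∈ Em y F.card := by
  refine ⟨F.image (· + 1), ?_, ?_⟩
  · exact Finset.card_image_of_injective _ (add_left_injective 1)
  · intro n hn
    obtain ⟨n', hn', rfl⟩ := Finset.mem_image.1 hn
    exact ⟨by omega, h n' hn'⟩

lemma le_posCount_of_mem_Em (y : A) (ω : ℕ → A) (m : ℕ) (h : ω ∈ Em y m) :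
    (m : ℝ≥0∞) ≤ ∑' n : ℕ, (if ω (n+1) = y then (1:ℝ≥0∞) else 0) := by
  obtain ⟨F, hcard, hmem⟩ := h
  have hinj : Set.InjOn (· - 1) (F : Set ℕ) := by
    intro a ha b hb hab
    have h1 := (hmem a ha).1
    have h2 := (hmem b hb).1
    simp only at hab
    omega
  calc (m : ℝ≥0∞) = ∑ n ∈ F.image (· - 1), (if ω (n+1) = y then (1:ℝ≥0∞) else 0) := by
        rw [Finset.sum_congr rfl (fun n hn => ?_), Finset.sum_const,
          Finset.card_image_of_injOn hinj, hcard, nsmul_eq_mul, mul_one]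
        obtain ⟨n', hn', rfl⟩ := Finset.mem_image.1 hn
        rw [if_pos]
        rw [show n' - 1 + 1 = n' by have := (hmem n' hn').1; omega]
        exact (hmem n' hn').2
  _ ≤ _ := ENNReal.sum_le_tsum _

lemma posCount_le_sum_indicator_Em (y : A) (ω : ℕ → A) :
    (∑' n : ℕ, (if ω (n+1) = y then (1:ℝ≥0∞) else 0)) ≤
      ∑' m : ℕ, (Em y (m+1)).indicator (fun _ => (1:ℝ≥0∞)) ω := by
  rw [ENNReal.tsum_eq_iSup_sum]
  refine iSup_le fun F => ?_
  classical
  set F' := F.filter (fun n => ω (n+1) = y) with hF'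
  have hsum : ∑ n ∈ F, (if ω (n+1) = y then (1:ℝ≥0∞) else 0) = (F'.card : ℝ≥0∞) :=
    sum_ite_card F _
  rw [hsum]
  have hmem : ω ∈ Em y F'.card :=
    mem_Em_of_finset y ω F' (fun n hn => (Finset.mem_filter.1 hn).2)
  calc (F'.card : ℝ≥0∞)
      = ∑ m ∈ Finset.range F'.card, (Em y (m+1)).indicator (fun _ => (1:ℝ≥0∞)) ω := by
        rw [Finset.sum_congr rfl (fun m hm => ?_), Finset.sum_const, Finset.card_range,
          nsmul_eq_mul, mul_one]
        rw [Finset.mem_range] at hm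
        rw [Set.indicator_of_mem (Em_antitone y (by omega : m+1 ≤ F'.card) hmem)]
  _ ≤ _ := ENNReal.sum_le_tsum _

lemma visitCount_top_iff (y : A) (ω : ℕ → A) :
    visitCount y ω = ⊤ ↔ ∀ m, ω ∈ Em y m := by
  constructor
  · intro h m
    have hpos : (∑' n : ℕ, (if ω (n+1) = y then (1:ℝ≥0∞) else 0)) = ⊤ := by
      by_contra hne
      rw [visitCount_split] at h
      have : (if ω 0 = y then (1:ℝ≥0∞) else 0) ≠ ⊤ := by split <;> simp
      exact (ENNReal.add_ne_top.2 ⟨this, hne⟩) h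
    rw [ENNReal.tsum_eq_iSup_sum] at hpos
    have : (m : ℝ≥0∞) < ⨆ s : Finset ℕ, ∑ n ∈ s, (if ω (n+1) = y then (1:ℝ≥0∞) else 0) := by
      rw [hpos]; exact ENNReal.natCast_lt_top m
    obtain ⟨F, hF⟩ := lt_iSup_iff.1 this
    classical
    set F' := F.filter (fun n => ω (n+1) = y) with hF'
    have hsum : ∑ n ∈ F, (if ω (n+1) = y then (1:ℝ≥0∞) else 0) = (F'.card : ℝ≥0∞) :=
      sum_ite_card F _
    rw [hsum, Nat.cast_lt] at hF
    exact Em_antitone y (le_of_lt hF) (mem_Em_of_finset y ω F'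
      (fun n hn => (Finset.mem_filter.1 hn).2))
  · intro h
    rw [visitCount_split]
    have : (∑' n : ℕ, (if ω (n+1) = y then (1:ℝ≥0∞) else 0)) = ⊤ :=
      ennreal_eq_top_of_nat_le fun m => le_posCount_of_mem_Em y ω m (h m)
    rw [this]
    simp

lemma visitCount_top_measurable (y : A) : MeasurableSet {ω : ℕ → A | visitCount y ω = ⊤} :=
  (measurable_visitCount y) (measurableSet_singleton ⊤)

include hnn hμ hprob in
lemma lintegral_visitCount (x y : A) :
    (∫⁻ ω, visitCount y ω ∂ μ x) = ∑' n : ℕ, μ x {ω : ℕ → A | ω n = y} := by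
  unfold visitCount
  have hmeas : ∀ n : ℕ, AEMeasurable
      (fun ω : ℕ → A => ({y} : Set A).indicator (fun _ => (1:ℝ≥0∞)) (ω n)) (μ x) := fun n =>
    ((measurable_const.indicator (measA {y})).comp (measurable_pi_apply n)).aemeasurable
  rw [lintegral_tsum hmeas]
  refine tsum_congr fun n => ?_
  have hh : ∀ ω : ℕ → A, ({y} : Set A).indicator (fun _ => (1:ℝ≥0∞)) (ω n) =
      ({ω' : ℕ → A | ω' n = y}).indicator (fun _ => (1:ℝ≥0∞)) ω := by
    intro ω
    rw [indicator_eq_ite]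
    by_cases h : ω n = y
    · rw [if_pos h]
      exact (Set.indicator_of_mem (show ω ∈ {ω' : ℕ → A | ω' n = y} from h) (fun _ => (1:ℝ≥0∞))).symm
    · rw [if_neg h]
      exact (Set.indicator_of_notMem (show ω ∉ {ω' : ℕ → A | ω' n = y} from h) (fun _ => (1:ℝ≥0∞))).symm
  calc (∫⁻ ω, ({y} : Set A).indicator (fun _ => (1:ℝ≥0∞)) (ω n) ∂ μ x)
      = ∫⁻ ω, ({ω' : ℕ → A | ω' n = y}).indicator (fun _ => (1:ℝ≥0∞)) ω ∂ μ x :=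
        lintegral_congr hh
  _ = 1 * μ x {ω' : ℕ → A | ω' n = y} := lintegral_indicator_const (measurable_coord_eq n y) 1
  _ = μ x {ω' : ℕ → A | ω' n = y} := one_mul _

include hnn hμ hprob in
lemma lintegral_visitCount_top (x y : A) (h : μ x {ω : ℕ → A | visitCount y ω = ⊤} = 1) :
    (∫⁻ ω, visitCount y ω ∂ μ x) = ⊤ := by
  have hb : ∀ ω : ℕ → A, ({ω' : ℕ → A | visitCount y ω' = ⊤}).indicator
      (fun _ => (⊤ : ℝ≥0∞)) ω ≤ visitCount y ω := by
    intro ω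
    by_cases hω : visitCount y ω = ⊤
    · simp [Set.indicator_apply, Set.mem_setOf_eq, hω]
    · simp [Set.indicator_apply, Set.mem_setOf_eq, hω]
  have := lintegral_mono hb (μ := μ x)
  rw [lintegral_indicator_const (visitCount_top_measurable y), h, mul_one] at this
  exact top_le_iff.1 this

include hnn hμ hprob in
lemma lintegral_visitCount_le (x y : A) :
    (∫⁻ ω, visitCount y ω ∂ μ x) ≤
      1 + μ x (Hit y) * ∑' m : ℕ, (μ y (Hit y))^m := by
  haveI := hprob x
  have hsplit : (∫⁻ ω, visitCount y ω ∂ μ x) =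
      (∫⁻ ω, (if ω 0 = y then (1:ℝ≥0∞) else 0) ∂ μ x) +
      (∫⁻ ω, (∑' n : ℕ, (if ω (n+1) = y then (1:ℝ≥0∞) else 0)) ∂ μ x) := by
    rw [← lintegral_add_left]
    · exact lintegral_congr fun ω => visitCount_split y ω
    · exact (measurable_const.ite (measurable_coord 0 {y}) measurable_const)
  rw [hsplit]
  have h1 : (∫⁻ ω, (if ω 0 = y then (1:ℝ≥0∞) else 0) ∂ μ x) ≤ 1 := by
    calc _ ≤ ∫⁻ _, (1:ℝ≥0∞) ∂ μ x := lintegral_mono (fun ω => by split <;> simp)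
    _ = 1 := by simp
  have h2 : (∫⁻ ω, (∑' n : ℕ, (if ω (n+1) = y then (1:ℝ≥0∞) else 0)) ∂ μ x) ≤
      μ x (Hit y) * ∑' m : ℕ, (μ y (Hit y))^m := by
    calc (∫⁻ ω, (∑' n : ℕ, (if ω (n+1) = y then (1:ℝ≥0∞) else 0)) ∂ μ x)
        ≤ ∫⁻ ω, (∑' m : ℕ, (Em y (m+1)).indicator (fun _ => (1:ℝ≥0∞)) ω) ∂ μ x :=
          lintegral_mono fun ω => posCount_le_sum_indicator_Em y ω
    _ = ∑' m : ℕ, μ x (Em y (m+1)) := by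
          rw [lintegral_tsum (fun m =>
            (measurable_const.indicator (Em_measurable y (m+1))).aemeasurable)]
          exact tsum_congr fun m => by
            rw [lintegral_indicator_const (Em_measurable y (m+1)), one_mul]
    _ = ∑' m : ℕ, μ x (Hit y) * (μ y (Hit y))^m := by
          exact tsum_congr fun m => meas_Em p hnn μ hμ hprob x y m
    _ = μ x (Hit y) * ∑' m : ℕ, (μ y (Hit y))^m := ENNReal.tsum_mul_left
  exact add_le_add h1 h2

include hnn hμ hprob in
lemma meas_visitCount_top (x y : A) :
    μ x {ω : ℕ → A | visitCount y ω = ⊤} = ⨅ m : ℕ, μ x (Em y m) := by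
  have hset : {ω : ℕ → A | visitCount y ω = ⊤} = ⋂ m : ℕ, Em y m := by
    ext ω
    simp only [Set.mem_setOf_eq, Set.mem_iInter]
    exact visitCount_top_iff y ω
  haveI := hprob x
  rw [hset]
  refine Directed.measure_iInter (fun m => (Em_measurable y m).nullMeasurableSet) ?_ ?_
  · intro m m'
    exact ⟨max m m', Em_antitone y (le_max_left _ _), Em_antitone y (le_max_right _ _)⟩
  · exact ⟨0, by rw [Em_zero]; simp [measure_univ]⟩

end visits

section ulemmas

include hnn hμ in
lemma meas_coord_zero (x y : A) :
    μ x {ω : ℕ → A | ω 0 = y} = if y = x then 1 else 0 := by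
  have : {ω : ℕ → A | ω 0 = y} = cyl 0 (fun _ => y) := by
    ext ω
    constructor
    · intro h i hi
      rw [Nat.le_zero.1 hi]; exact h
    · intro h; exact h 0 le_rfl
  rw [this, meas_cyl p hnn μ hμ]
  unfold Wgt
  simp

include hnn hμ in
lemma meas_coord_one (z y : A) :
    μ z {ω : ℕ → A | ω 1 = y} = ENNReal.ofReal (p z y) := by
  have hdec : {ω : ℕ → A | ω 1 = y} = ⋃ w : A, cyl 1 (fun i => if i = 0 then w else y) := by
    ext ω
    constructor
    · intro h
      refine Set.mem_iUnion.2 ⟨ω 0, fun i hi => ?_⟩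
      match i, hi with
      | 0, _ => simp
      | 1, _ => simpa using h
    · intro h
      obtain ⟨w, hw⟩ := Set.mem_iUnion.1 h
      have := hw 1 le_rfl
      simpa using this
  rw [hdec, measure_iUnion]
  · rw [show ENNReal.ofReal (p z y) = ∑' w : A,
      (if w = z then 1 else 0) * ENNReal.ofReal (p w y) from ?_]
    · exact tsum_congr fun w => by
        rw [meas_cyl p hnn μ hμ]
        unfold Wgt
        simp
    · rw [tsum_eq_single z (fun w hw => by rw [if_neg hw, zero_mul])]
      rw [if_pos rfl, one_mul]
  · intro w w' hne
    rw [Function.onFun, Set.disjoint_left]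
    intro ω hω hω'
    have h1 := hω 0 (by omega)
    have h2 := hω' 0 (by omega)
    norm_num at h1 h2
    exact hne (h1 ▸ h2 ▸ rfl)
  · intro w; exact cyl_measurable _ _

include hnn hμ hprob in
lemma markov_coord (x z : A) (n : ℕ) {F : Set (ℕ → A)} (hF : MeasurableSet F) :
    μ x ({ω : ℕ → A | ω n = z} ∩ shift n ⁻¹' F) = μ x {ω : ℕ → A | ω n = z} * μ z F := by
  refine markov_set p hnn μ hμ hprob x z n _ ?_ (fun ω hω => hω) hF
  intro ω ω' hagree hω
  show ω' n = z
  rw [← hagree n le_rfl]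
  exact hω

include hnn hμ hprob in
lemma u_superadditive (x z y : A) (m n : ℕ) :
    μ x {ω : ℕ → A | ω m = z} * μ z {ω : ℕ → A | ω n = y} ≤
      μ x {ω : ℕ → A | ω (m+n) = y} := by
  rw [← markov_coord p hnn μ hμ hprob x z m (measurable_coord_eq n y)]
  refine measure_mono ?_
  rintro ω ⟨-, h2⟩
  exact h2

include hnn hμ hprob in
lemma u_recursion_ge (x y : A) (n : ℕ) :
    ∑' z : A, μ x {ω : ℕ → A | ω n = z} * ENNReal.ofReal (p z y) ≤
      μ x {ω : ℕ → A | ω (n+1) = y} := by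
  have hterm : ∀ z : A, μ x {ω : ℕ → A | ω n = z} * ENNReal.ofReal (p z y) =
      μ x ({ω : ℕ → A | ω n = z} ∩ shift n ⁻¹' {ω : ℕ → A | ω 1 = y}) := by
    intro z
    rw [markov_coord p hnn μ hμ hprob x z n (measurable_coord_eq 1 y),
      meas_coord_one p hnn μ hμ]
  rw [tsum_congr hterm, ← measure_iUnion]
  · refine measure_mono ?_
    rintro ω hω
    obtain ⟨z, -, h2⟩ := Set.mem_iUnion.1 hω
    exact h2
  · intro z z' hne
    rw [Function.onFun, Set.disjoint_left]
    rintro ω ⟨h1, -⟩ ⟨h2, -⟩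
    exact hne (h1 ▸ h2 ▸ rfl)
  · intro z
    exact (measurable_coord_eq n z).inter (measurable_shift n (measurable_coord_eq 1 y))

include hnn in
lemma matPow_nonneg (n : ℕ) (x y : A) : 0 ≤ matPow p n x y := by
  induction n generalizing x y with
  | zero => unfold matPow; split <;> norm_num
  | succ n ih =>
    unfold matPow
    exact tsum_nonneg fun z => mul_nonneg (ih x z) (hnn z y)

lemma ofReal_tsum_le {ι : Type*} [Countable ι] (g : ι → ℝ) (hg : ∀ i, 0 ≤ g i) :
    ENNReal.ofReal (∑' i, g i) ≤ ∑' i, ENNReal.ofReal (g i) := by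
  by_cases hsum : Summable g
  · rw [ENNReal.ofReal_tsum_of_nonneg hg hsum]
  · rw [tsum_eq_zero_of_not_summable hsum]
    simp

include hnn hμ hprob in
lemma matPow_le_u (n : ℕ) (x y : A) :
    ENNReal.ofReal (matPow p n x y) ≤ μ x {ω : ℕ → A | ω n = y} := by
  induction n generalizing x y with
  | zero =>
    rw [meas_coord_zero p hnn μ hμ]
    unfold matPow
    by_cases h : x = y
    · subst h; simp
    · rw [if_neg h, if_neg (fun hh => h hh.symm)]
      simp
  | succ n ih =>
    show ENNReal.ofReal (∑' z, matPow p n x z * p z y) ≤ _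
    calc ENNReal.ofReal (∑' z, matPow p n x z * p z y)
        ≤ ∑' z, ENNReal.ofReal (matPow p n x z * p z y) :=
          ofReal_tsum_le _ (fun z => mul_nonneg (matPow_nonneg p hnn n x z) (hnn z y))
    _ = ∑' z, ENNReal.ofReal (matPow p n x z) * ENNReal.ofReal (p z y) := by
          exact tsum_congr fun z => ENNReal.ofReal_mul (matPow_nonneg p hnn n x z)
    _ ≤ ∑' z, μ x {ω : ℕ → A | ω n = z} * ENNReal.ofReal (p z y) := by
          gcongr with z
          exact ih x z
    _ ≤ _ := u_recursion_ge p hnn μ hμ hprob x y n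

end ulemmas


section composite

include hnn hμ hprob in
lemma vc_one_of_rec (x y : A) (hyy : μ y (Hit y) = 1) (hxy : μ x (Hit y) = 1) :
    μ x {ω : ℕ → A | visitCount y ω = ⊤} = 1 := by
  haveI := hprob x
  rw [meas_visitCount_top p hnn μ hμ hprob x y]
  have hs : ∀ m, μ x (Em y m) = 1 := by
    intro m
    match m with
    | 0 => rw [Em_zero]; exact measure_univ
    | m+1 => rw [meas_Em p hnn μ hμ hprob, hxy, hyy, one_pow, one_mul]
  simp [hs]

include hnn hμ hprob in
lemma hit_self_eq_one_of_lintegral_top (x y : A)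
    (h : (∫⁻ ω, visitCount y ω ∂ μ x) = ⊤) : μ y (Hit y) = 1 := by
  haveI := hprob x
  haveI := hprob y
  by_contra hne
  have hlt : μ y (Hit y) < 1 := lt_of_le_of_ne prob_le_one hne
  have hsum : ∑' m : ℕ, (μ y (Hit y))^m = (1 - μ y (Hit y))⁻¹ := ENNReal.tsum_geometric _
  have hfin : (1 - μ y (Hit y))⁻¹ ≠ ⊤ := by
    rw [Ne, ENNReal.inv_eq_top, tsub_eq_zero_iff_le]
    exact not_le.2 hlt
  have hb := lintegral_visitCount_le p hnn μ hμ hprob x y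
  rw [h, hsum] at hb
  have : (1 : ℝ≥0∞) + μ x (Hit y) * (1 - μ y (Hit y))⁻¹ ≠ ⊤ :=
    ENNReal.add_ne_top.2 ⟨ENNReal.one_ne_top,
      ENNReal.mul_ne_top (ne_of_lt (lt_of_le_of_lt prob_le_one (by norm_num))) hfin⟩
  exact this (top_le_iff.1 hb)

include hnn hμ hprob in
lemma hit_eq_one_of_recurrent (y a : A)
    (hrec : μ y {ω : ℕ → A | visitCount y ω = ⊤} = 1)
    (hq : 0 < μ y (Hit a)) : μ a (Hit y) = 1 := by
  haveI := hprob y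
  haveI := hprob a
  have hsum : μ y (Hit a) = ∑' k : ℕ, μ y (Tau a (k+1)) := meas_Hit p hnn μ hμ hprob y a
  have hex : ∃ k, 0 < μ y (Tau a (k+1)) := by
    by_contra hcon
    push_neg at hcon
    have hz : ∀ k : ℕ, μ y (Tau a (k+1)) = 0 := fun k => le_antisymm (hcon k) zero_le
    rw [hsum, tsum_congr hz, tsum_zero] at hq
    exact lt_irrefl 0 hq
  obtain ⟨k, hk⟩ := hex
  have hincl : Tau a (k+1) ∩ shift (k+1) ⁻¹' (Hit y)ᶜ ⊆
      {ω : ℕ → A | visitCount y ω = ⊤}ᶜ := by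
    rintro ω ⟨hτ, hshift⟩ hvc
    have hEm := (visitCount_top_iff y ω).1 hvc (k+2)
    obtain ⟨F, hcard, hmem⟩ := hEm
    have hbig : ∃ n ∈ F, k+1 < n := by
      by_contra hcon
      push_neg at hcon
      have hsub : F ⊆ Finset.Icc 1 (k+1) := fun n hn =>
        Finset.mem_Icc.2 ⟨(hmem n hn).1, hcon n hn⟩
      have := Finset.card_le_card hsub
      rw [hcard, Nat.card_Icc] at this
      omega
    obtain ⟨n, hnF, hn⟩ := hbig
    refine hshift ⟨n - (k+1), by omega, ?_⟩
    unfold shift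
    rw [show (k+1) + (n - (k+1)) = n by omega]
    exact (hmem n hnF).2
  have h0 : μ y (Tau a (k+1) ∩ shift (k+1) ⁻¹' (Hit y)ᶜ) = 0 := by
    refine le_antisymm ?_ zero_le
    calc μ y (Tau a (k+1) ∩ shift (k+1) ⁻¹' (Hit y)ᶜ)
        ≤ μ y ({ω : ℕ → A | visitCount y ω = ⊤}ᶜ) := measure_mono hincl
    _ = 0 := by
        rw [measure_compl (visitCount_top_measurable y) (measure_ne_top _ _), hrec,
          measure_univ, tsub_self]
  rw [markov_tau p hnn μ hμ hprob y a y k (Hit_measurable y).compl] at h0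
  have hcompl : μ a ((Hit y)ᶜ) = 0 := (mul_eq_zero.1 h0).resolve_left (ne_of_gt hk)
  rw [measure_compl (Hit_measurable y) (measure_ne_top _ _), measure_univ,
    tsub_eq_zero_iff_le] at hcompl
  exact le_antisymm prob_le_one hcompl

include hnn hμ hprob in
lemma hit_pos (hirr : ∀ x y : A, ∃ n : ℕ, 0 < matPow p n x y)
    (x y : A) (hxy : x ≠ y) : 0 < μ x (Hit y) := by
  obtain ⟨n, hn⟩ := hirr x y
  match n, hn with
  | 0, hn =>
    unfold matPow at hn
    rw [if_neg hxy] at hn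
    exact absurd hn (lt_irrefl 0)
  | m+1, hn =>
    have h1 : 0 < ENNReal.ofReal (matPow p (m+1) x y) := ENNReal.ofReal_pos.2 hn
    have h2 := matPow_le_u p hnn μ hμ hprob (m+1) x y
    have h3 : {ω : ℕ → A | ω (m+1) = y} ⊆ Hit y := fun ω hω => ⟨m+1, by omega, hω⟩
    exact lt_of_lt_of_le h1 (h2.trans (measure_mono h3))

include hnn hμ hprob in
lemma lintegral_self_top_of (hirr : ∀ x y : A, ∃ n : ℕ, 0 < matPow p n x y)
    (y b : A) (htop : (∫⁻ ω, visitCount y ω ∂ μ y) = ⊤) :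
    (∫⁻ ω, visitCount b ω ∂ μ b) = ⊤ := by
  by_cases hby : b = y
  · subst hby; exact htop
  obtain ⟨i, hi⟩ := hirr b y
  obtain ⟨j, hj⟩ := hirr y b
  have hα : 0 < μ b {ω : ℕ → A | ω i = y} :=
    lt_of_lt_of_le (ENNReal.ofReal_pos.2 hi) (matPow_le_u p hnn μ hμ hprob i b y)
  have hβ : 0 < μ y {ω : ℕ → A | ω j = b} :=
    lt_of_lt_of_le (ENNReal.ofReal_pos.2 hj) (matPow_le_u p hnn μ hμ hprob j y b)
  rw [lintegral_visitCount p hnn μ hμ hprob] at htop ⊢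
  have hchain : ∀ n : ℕ, μ b {ω : ℕ → A | ω i = y} *
      (μ y {ω : ℕ → A | ω n = y} * μ y {ω : ℕ → A | ω j = b}) ≤
      μ b {ω : ℕ → A | ω (i + (n + j)) = b} := by
    intro n
    calc μ b {ω : ℕ → A | ω i = y} *
        (μ y {ω : ℕ → A | ω n = y} * μ y {ω : ℕ → A | ω j = b})
        ≤ μ b {ω : ℕ → A | ω i = y} * μ y {ω : ℕ → A | ω (n+j) = b} := by
          gcongr
          exact u_superadditive p hnn μ hμ hprob y y b n j
    _ ≤ _ := u_superadditive p hnn μ hμ hprob b y b i (n+j)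
  have hsum1 : ∑' n : ℕ, μ b {ω : ℕ → A | ω i = y} *
      (μ y {ω : ℕ → A | ω n = y} * μ y {ω : ℕ → A | ω j = b}) = ⊤ := by
    rw [ENNReal.tsum_mul_left, ENNReal.tsum_mul_right, htop,
      ENNReal.top_mul (ne_of_gt hβ), ENNReal.mul_top (ne_of_gt hα)]
  have hinj : Function.Injective (fun n : ℕ => i + (n + j)) := by
    intro n n' h
    simp only at h
    omega
  refine top_le_iff.1 ?_
  calc (⊤ : ℝ≥0∞) = ∑' n : ℕ, μ b {ω : ℕ → A | ω i = y} *
      (μ y {ω : ℕ → A | ω n = y} * μ y {ω : ℕ → A | ω j = b}) := hsum1.symm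
  _ ≤ ∑' n : ℕ, μ b {ω : ℕ → A | ω (i + (n + j)) = b} := ENNReal.tsum_le_tsum hchain
  _ ≤ ∑' n : ℕ, μ b {ω : ℕ → A | ω n = b} :=
      ENNReal.tsum_comp_le_tsum_of_injective hinj (fun n => μ b {ω : ℕ → A | ω n = b})

end composite

end withP
end MCAux

/-- For an irreducible Markov chain with stochastic transition matrix `p` on a
countable state space `A`, with laws `μ_x` given by the cylinder formula, the following are
equivalent: (1) recurrence: `μ_y(τ_x < ∞) = 1` for all `x,y`; (2) `E^x[V_y] = ∞` for all
`x,y`; (3) `E^x[V_y] = ∞` for some `x,y`; (4) `μ_x(V_y = ∞) = 1` for all `x,y`;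
(5) `μ_x(V_y = ∞) = 1` for some `x,y`. -/
theorem stmt_1 {A : Type*} [Countable A] [Nonempty A] [DecidableEq A]
    [MeasurableSpace A] [MeasurableSingletonClass A]
    (p : A → A → ℝ)
    (hnn : ∀ x y, 0 ≤ p x y) (hrow : ∀ x, HasSum (p x) 1)
    (μ : A → Measure (ℕ → A)) (hprob : ∀ x, IsProbabilityMeasure (μ x))
    (hμ : ∀ (x : A) (n : ℕ) (a : ℕ → A),
      μ x {ω | ∀ i ≤ n, ω i = a i} =
        ENNReal.ofReal ((if a 0 = x then (1 : ℝ) else 0) *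
          ∏ i ∈ Finset.range n, p (a i) (a (i + 1))))
    (hirr : ∀ x y : A, ∃ n : ℕ, 0 < matPow p n x y) :
    List.TFAE
      [∀ x y : A, μ y {ω | ∃ k : ℕ, 1 ≤ k ∧ ω k = x} = 1,
       ∀ x y : A, (∫⁻ ω, visitCount y ω ∂μ x) = ⊤,
       ∃ x y : A, (∫⁻ ω, visitCount y ω ∂μ x) = ⊤,
       ∀ x y : A, μ x {ω | visitCount y ω = ⊤} = 1,
       ∃ x y : A, μ x {ω | visitCount y ω = ⊤} = 1] := by
  tfae_have 1 → 4 := by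
    intro h1 x y
    exact MCAux.vc_one_of_rec p hnn μ hμ hprob x y (h1 y y) (h1 y x)
  tfae_have 4 → 2 := by
    intro h4 x y
    exact MCAux.lintegral_visitCount_top p hnn μ hμ hprob x y (h4 x y)
  tfae_have 2 → 3 := by
    intro h2
    exact ⟨Classical.arbitrary A, Classical.arbitrary A, h2 _ _⟩
  tfae_have 4 → 5 := by
    intro h4
    exact ⟨Classical.arbitrary A, Classical.arbitrary A, h4 _ _⟩
  tfae_have 5 → 3 := by
    rintro ⟨x, y, h⟩
    exact ⟨x, y, MCAux.lintegral_visitCount_top p hnn μ hμ hprob x y h⟩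
  tfae_have 3 → 1 := by
    rintro ⟨x, y, hxy⟩ a c
    have hyy : μ y (MCAux.Hit y) = 1 :=
      MCAux.hit_self_eq_one_of_lintegral_top p hnn μ hμ hprob x y hxy
    have hrecy : μ y {ω : ℕ → A | visitCount y ω = ⊤} = 1 :=
      MCAux.vc_one_of_rec p hnn μ hμ hprob y y hyy hyy
    have htopy : (∫⁻ ω, visitCount y ω ∂ μ y) = ⊤ :=
      MCAux.lintegral_visitCount_top p hnn μ hμ hprob y y hrecy
    have htopa : (∫⁻ ω, visitCount a ω ∂ μ a) = ⊤ :=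
      MCAux.lintegral_self_top_of p hnn μ hμ hprob hirr y a htopy
    have haa : μ a (MCAux.Hit a) = 1 :=
      MCAux.hit_self_eq_one_of_lintegral_top p hnn μ hμ hprob a a htopa
    have hreca : μ a {ω : ℕ → A | visitCount a ω = ⊤} = 1 :=
      MCAux.vc_one_of_rec p hnn μ hμ hprob a a haa haa
    by_cases hca : c = a
    · subst hca
      exact haa
    · exact MCAux.hit_eq_one_of_recurrent p hnn μ hμ hprob a c hreca
        (MCAux.hit_pos p hnn μ hμ hprob hirr a c (fun h => hca h.symm))
  tfae_finish
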